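/- Fix integers p, r, d ≥ 1, let β be a fixed-point-free involution of Legs = Fin p × Fin r × Bool, and let B_R(β) := card {z ∈ Legs | z has Bool coordinate true and β z has Bool coordinate true} (this equals 2♭(β), twice the number of bumps of β). Then for every positive semidefinite ρ ∈ M_{d^r}(ℂ) with Tr ρ = 1, one has |f_β(ρ)|² ≤ d^{B_R(β)}. -/

import Mathlib

open ComplexOrder

/-- A pairing of `X` is a fixed-point-free involution of `X`. -/
def IsPairing {X : Type*} (α : Equiv.Perm X) : Prop :=
  α * α = 1 ∧ ∀ x, α x ≠ x

/-- The value assigned to a leg `(i, x, s)`: `a i x` on a left leg (`s = false`),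
`b i x` on a right leg (`s = true`). -/
def legVal {p r d : ℕ} (a b : Fin p → Fin r → Fin d) :
    Fin p × Fin r × Bool → Fin d :=
  fun z => if z.2.2 then b z.1 z.2.1 else a z.1 z.2.1

/-- The contraction `f_β(ρ) = Tr[ρ^{⊗p} M(β)]`: the sum over all index assignments
compatible with the pairing `β` of the corresponding products of entries of `ρ`. -/
noncomputable def fBeta {p r d : ℕ} (β : Equiv.Perm (Fin p × Fin r × Bool))
    (ρ : Matrix (Fin r → Fin d) (Fin r → Fin d) ℂ) : ℂ :=
  ∑ a : Fin p → Fin r → Fin d, ∑ b : Fin p → Fin r → Fin d,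
    (∏ i : Fin p, ρ (a i) (b i)) *
      (if ∀ z : Fin p × Fin r × Bool, legVal a b z = legVal a b (β z) then 1 else 0)

/-- `B_R(β) = 2♭(β)`: the number of right legs paired by `β` to right legs. -/
def bigBR {p r : ℕ} (β : Equiv.Perm (Fin p × Fin r × Bool)) : ℕ :=
  (Finset.univ.filter fun z : Fin p × Fin r × Bool =>
    z.2.2 = true ∧ (β z).2.2 = true).card

namespace Stmt18

variable {p r d : ℕ}

/-- an arbitrary linear ordering of the legs -/
noncomputable def ordL : (Fin p × Fin r × Bool) → ℕ := fun z => (Fintype.equivFin _ z : ℕ)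

lemma ordL_inj : Function.Injective (ordL (p := p) (r := r)) :=
  Fin.val_injective.comp (Equiv.injective _)

variable (β : Equiv.Perm (Fin p × Fin r × Bool))

lemma beta_beta (hβ : IsPairing β) (z : Fin p × Fin r × Bool) : β (β z) = z := by
  have := congrArg (fun e : Equiv.Perm _ => e z) hβ.1
  simpa [Equiv.Perm.mul_apply] using this

/-- one chosen leg per same-side pair, on side `s` -/
noncomputable def sideS (s : Bool) : Finset (Fin p × Fin r × Bool) :=
  Finset.univ.filter fun z => z.2.2 = s ∧ (β z).2.2 = s ∧ ordL z < ordL (β z)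

lemma two_mul_sideS (hβ : IsPairing β) (s : Bool) :
    2 * (sideS β s).card =
      (Finset.univ.filter fun z : Fin p × Fin r × Bool =>
        z.2.2 = s ∧ (β z).2.2 = s).card := by
  classical
  set R : Finset (Fin p × Fin r × Bool) :=
    Finset.univ.filter fun z => z.2.2 = s ∧ (β z).2.2 = s with hR
  have hsplit := Finset.card_filter_add_card_filter_not
    (s := R) (p := fun z => ordL z < ordL (β z))
  have h1 : R.filter (fun z => ordL z < ordL (β z)) = sideS β s := by
    simp [hR, sideS, Finset.filter_filter, and_assoc]
  have h2 : (R.filter (fun z => ¬ ordL z < ordL (β z))).card = (sideS β s).card := by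
    apply Finset.card_nbij (i := β)
    · intro z hz
      simp only [Finset.mem_coe, hR, Finset.mem_filter, Finset.mem_univ, true_and, sideS] at hz ⊢
      obtain ⟨⟨hz1, hz2⟩, hz3⟩ := hz
      have hne : ordL (β z) ≠ ordL z := fun h => hβ.2 z (ordL_inj h)
      exact ⟨hz2, by rw [beta_beta β hβ]; exact hz1,
        by rw [beta_beta β hβ]; exact lt_of_le_of_ne (not_lt.1 hz3) hne⟩
    · exact fun x _ y _ h => β.injective h
    · intro w hw
      simp only [Finset.coe_filter, Finset.mem_coe, sideS, hR, Finset.mem_filter,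
        Finset.mem_univ, true_and, Set.mem_setOf_eq] at hw ⊢
      obtain ⟨hw1, hw2, hw3⟩ := hw
      refine ⟨β w, ⟨⟨hw2, by rw [beta_beta β hβ]; exact hw1⟩, ?_⟩, beta_beta β hβ w⟩
      rw [beta_beta β hβ]
      exact not_lt.mpr hw3.le
  rw [h1, h2] at hsplit
  omega

end Stmt18

namespace Stmt18
variable {p r : ℕ} (β : Equiv.Perm (Fin p × Fin r × Bool))

lemma BL_eq_BR (hβ : IsPairing β) :
    (Finset.univ.filter fun z : Fin p × Fin r × Bool =>
      z.2.2 = false ∧ (β z).2.2 = false).card = bigBR β := by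
  classical
  have hflip : (Finset.univ.filter fun z : Fin p × Fin r × Bool => z.2.2 = false).card
      = (Finset.univ.filter fun z : Fin p × Fin r × Bool => z.2.2 = true).card := by
    apply Finset.card_nbij (i := fun z => (z.1, z.2.1, !z.2.2))
    · intro z hz
      simp only [Finset.mem_coe, Finset.mem_filter, Finset.mem_univ, true_and] at hz ⊢
      simp [hz]
    · intro x _ y _ h
      simp only [Prod.mk.injEq] at h
      obtain ⟨h1, h2, h3⟩ := h
      exact Prod.ext h1 (Prod.ext h2 (Bool.not_inj h3))
    · intro w hw
      simp only [Finset.coe_filter, Set.mem_setOf_eq, Finset.mem_univ, true_and,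
        Set.mem_image] at hw ⊢
      obtain ⟨i, x, s⟩ := w
      exact ⟨(i, x, !s), by simpa using hw, by simpa using hw⟩
  have hsplitL := Finset.card_filter_add_card_filter_not
    (s := Finset.univ.filter fun z : Fin p × Fin r × Bool => z.2.2 = false)
    (p := fun z => (β z).2.2 = false)
  have hsplitR := Finset.card_filter_add_card_filter_not
    (s := Finset.univ.filter fun z : Fin p × Fin r × Bool => z.2.2 = true)
    (p := fun z => (β z).2.2 = true)
  simp only [Finset.filter_filter] at hsplitL hsplitR
  have hcross : (Finset.univ.filter fun z : Fin p × Fin r × Bool =>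
      z.2.2 = false ∧ ¬ (β z).2.2 = false).card
      = (Finset.univ.filter fun z : Fin p × Fin r × Bool =>
      z.2.2 = true ∧ ¬ (β z).2.2 = true).card := by
    apply Finset.card_nbij (i := β)
    · intro z hz
      simp only [Finset.mem_coe, Finset.mem_filter, Finset.mem_univ, true_and, Bool.not_eq_false,
        Bool.not_eq_true] at hz ⊢
      exact ⟨hz.2, by rw [beta_beta β hβ]; exact hz.1⟩
    · exact fun x _ y _ h => β.injective h
    · intro w hw
      simp only [Finset.coe_filter, Set.mem_setOf_eq, Finset.mem_univ, true_and,
        Bool.not_eq_false, Bool.not_eq_true, Set.mem_image] at hw ⊢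
      exact ⟨β w, ⟨hw.2, by rw [beta_beta β hβ]; exact hw.1⟩, beta_beta β hβ w⟩
  unfold bigBR
  omega

end Stmt18

namespace Stmt18
variable {p r d : ℕ} (β : Equiv.Perm (Fin p × Fin r × Bool))

lemma card_compat_right (hβ : IsPairing β) (a : Fin p → Fin r → Fin d) :
    (Finset.univ.filter fun b : Fin p → Fin r → Fin d =>
      ∀ z, legVal a b z = legVal a b (β z)).card ≤ d ^ (sideS β true).card := by
  classical
  have hcard : (Finset.univ : Finset (↥(sideS β true) → Fin d)).card
      = d ^ (sideS β true).card := by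
    rw [Finset.card_univ, Fintype.card_fun, Fintype.card_fin, Fintype.card_coe]
  rw [← hcard]
  apply Finset.card_le_card_of_injOn
    (f := fun b (z : ↥(sideS β true)) => b (z : Fin p × Fin r × Bool).1
      (z : Fin p × Fin r × Bool).2.1)
    (fun _ _ => Finset.mem_univ _)
  intro b₁ hb₁ b₂ hb₂ h
  simp only [Finset.coe_filter, Finset.mem_univ, true_and, Set.mem_setOf_eq] at hb₁ hb₂
  funext i x
  set z : Fin p × Fin r × Bool := (i, x, true) with hz
  by_cases h2 : (β z).2.2
  · by_cases h3 : ordL z < ordL (β z)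
    · have hmem : z ∈ sideS β true := by
        simp only [sideS, Finset.mem_filter, Finset.mem_univ, true_and]
        exact ⟨rfl, h2, h3⟩
      exact congrFun h ⟨z, hmem⟩
    · have hne : ordL z ≠ ordL (β z) := fun hh => hβ.2 z (ordL_inj hh).symm
      have hmem : β z ∈ sideS β true := by
        simp only [sideS, Finset.mem_filter, Finset.mem_univ, true_and]
        refine ⟨h2, by rw [beta_beta β hβ], ?_⟩
        rw [beta_beta β hβ]
        exact lt_of_le_of_ne (not_lt.1 h3) (Ne.symm hne)
      have hkey := congrFun h ⟨β z, hmem⟩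
      have e₁ : b₁ i x = b₁ (β z).1 (β z).2.1 := by
        have := hb₁ z
        simpa [legVal, h2, show z.2.2 = true from rfl] using this
      have e₂ : b₂ i x = b₂ (β z).1 (β z).2.1 := by
        have := hb₂ z
        simpa [legVal, h2, show z.2.2 = true from rfl] using this
      rw [e₁, e₂]
      exact hkey
  · have e₁ : b₁ i x = a (β z).1 (β z).2.1 := by
      have := hb₁ z
      simpa [legVal, h2, show z.2.2 = true from rfl] using this
    have e₂ : b₂ i x = a (β z).1 (β z).2.1 := by
      have := hb₂ z
      simpa [legVal, h2, show z.2.2 = true from rfl] using this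
    rw [e₁, e₂]

lemma card_compat_left (hβ : IsPairing β) (b : Fin p → Fin r → Fin d) :
    (Finset.univ.filter fun a : Fin p → Fin r → Fin d =>
      ∀ z, legVal a b z = legVal a b (β z)).card ≤ d ^ (sideS β false).card := by
  classical
  have hcard : (Finset.univ : Finset (↥(sideS β false) → Fin d)).card
      = d ^ (sideS β false).card := by
    rw [Finset.card_univ, Fintype.card_fun, Fintype.card_fin, Fintype.card_coe]
  rw [← hcard]
  apply Finset.card_le_card_of_injOn
    (f := fun a (z : ↥(sideS β false)) => a (z : Fin p × Fin r × Bool).1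
      (z : Fin p × Fin r × Bool).2.1)
    (fun _ _ => Finset.mem_univ _)
  intro a₁ ha₁ a₂ ha₂ h
  simp only [Finset.coe_filter, Finset.mem_univ, true_and, Set.mem_setOf_eq] at ha₁ ha₂
  funext i x
  set z : Fin p × Fin r × Bool := (i, x, false) with hz
  by_cases h2 : (β z).2.2
  · have e₁ : a₁ i x = b (β z).1 (β z).2.1 := by
      have := ha₁ z
      simpa [legVal, h2] using this
    have e₂ : a₂ i x = b (β z).1 (β z).2.1 := by
      have := ha₂ z
      simpa [legVal, h2] using this
    rw [e₁, e₂]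
  · by_cases h3 : ordL z < ordL (β z)
    · have hmem : z ∈ sideS β false := by
        simp only [sideS, Finset.mem_filter, Finset.mem_univ, true_and]
        exact ⟨rfl, by simpa using h2, h3⟩
      exact congrFun h ⟨z, hmem⟩
    · have hne : ordL z ≠ ordL (β z) := fun hh => hβ.2 z (ordL_inj hh).symm
      have hmem : β z ∈ sideS β false := by
        simp only [sideS, Finset.mem_filter, Finset.mem_univ, true_and]
        refine ⟨by simpa using h2, by rw [beta_beta β hβ], ?_⟩
        rw [beta_beta β hβ]
        exact lt_of_le_of_ne (not_lt.1 h3) (Ne.symm hne)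
      have hkey := congrFun h ⟨β z, hmem⟩
      have e₁ : a₁ i x = a₁ (β z).1 (β z).2.1 := by
        have := ha₁ z
        simpa [legVal, h2] using this
      have e₂ : a₂ i x = a₂ (β z).1 (β z).2.1 := by
        have := ha₂ z
        simpa [legVal, h2] using this
      rw [e₁, e₂]
      exact hkey

end Stmt18


namespace Stmt18

open Finset

lemma main_bound {ι κ : Type*} [Fintype ι] [Fintype κ] (u : κ → ι → ℂ)
    (C : ι → ι → Prop) [∀ a b, Decidable (C a b)] (NR NL : ℕ)
    (hS1 : ∑ k : κ, ∑ a : ι, ‖u k a‖ ^ 2 = 1)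
    (hcard1 : ∀ a, (Finset.univ.filter fun b => C a b).card ≤ NR)
    (hcard2 : ∀ b, (Finset.univ.filter fun a => C a b).card ≤ NL) :
    ‖∑ a : ι, ∑ b : ι,
      (∑ k : κ, (starRingEnd ℂ) (u k a) * u k b) * (if C a b then 1 else 0)‖ ^ 2
      ≤ (NR : ℝ) * NL := by
  classical
  set T : ι → Finset ι := fun a => Finset.univ.filter fun b => C a b with hT
  set w : κ → ι → ℂ := fun k a => ∑ b ∈ T a, u k b with hw
  set q : ι → ℝ := fun b => ∑ k : κ, ‖u k b‖ ^ 2 with hqdef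
  have hq : ∀ b, 0 ≤ q b := fun b => Finset.sum_nonneg fun k _ => by positivity
  have hq1 : ∑ b : ι, q b = 1 := Finset.sum_comm.trans hS1
  have hwval : ∀ k a, w k a = ∑ b : ι, (if C a b then u k b else 0) := fun k a =>
    Finset.sum_filter _ _
  -- rewrite the contraction
  have f_eq : (∑ a : ι, ∑ b : ι,
      (∑ k : κ, (starRingEnd ℂ) (u k a) * u k b) * (if C a b then 1 else 0))
      = ∑ k : κ, ∑ a : ι, (starRingEnd ℂ) (u k a) * w k a := by
    calc (∑ a : ι, ∑ b : ι,
        (∑ k : κ, (starRingEnd ℂ) (u k a) * u k b) * (if C a b then 1 else 0))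
        = ∑ a : ι, ∑ b : ι, ∑ k : κ,
            (starRingEnd ℂ) (u k a) * (if C a b then u k b else 0) := by
          refine Finset.sum_congr rfl fun a _ => Finset.sum_congr rfl fun b _ => ?_
          rw [Finset.sum_mul]
          refine Finset.sum_congr rfl fun k _ => ?_
          by_cases h : C a b <;> simp [h]
      _ = ∑ a : ι, ∑ k : κ, ∑ b : ι,
            (starRingEnd ℂ) (u k a) * (if C a b then u k b else 0) :=
          Finset.sum_congr rfl fun a _ => Finset.sum_comm
      _ = ∑ k : κ, ∑ a : ι, ∑ b : ι,
            (starRingEnd ℂ) (u k a) * (if C a b then u k b else 0) := Finset.sum_comm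
      _ = ∑ k : κ, ∑ a : ι, (starRingEnd ℂ) (u k a) * w k a := by
          refine Finset.sum_congr rfl fun k _ => Finset.sum_congr rfl fun a _ => ?_
          rw [hwval, Finset.mul_sum]
  -- triangle inequality
  have habs : ‖∑ k : κ, ∑ a : ι, (starRingEnd ℂ) (u k a) * w k a‖
      ≤ ∑ k : κ, ∑ a : ι, ‖u k a‖ * ‖w k a‖ := by
    refine le_trans (norm_sum_le _ _) (Finset.sum_le_sum fun k _ => ?_)
    refine le_trans (norm_sum_le _ _) (Finset.sum_le_sum fun a _ => ?_)
    rw [norm_mul, Complex.norm_conj]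
  -- Cauchy-Schwarz over (κ × ι)
  have hCS : (∑ k : κ, ∑ a : ι, ‖u k a‖ * ‖w k a‖) ^ 2
      ≤ (∑ k : κ, ∑ a : ι, ‖u k a‖ ^ 2)
        * (∑ k : κ, ∑ a : ι, ‖w k a‖ ^ 2) := by
    have := Finset.sum_mul_sq_le_sq_mul_sq (Finset.univ : Finset (κ × ι))
      (fun z => ‖u z.1 z.2‖) (fun z => ‖w z.1 z.2‖)
    simpa [Fintype.sum_prod_type] using this
  -- bound on the second factor
  have hw2 : ∀ k a, ‖w k a‖ ^ 2
      ≤ ((T a).card : ℝ) * ∑ b ∈ T a, ‖u k b‖ ^ 2 := by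
    intro k a
    have h1 : ‖w k a‖ ≤ ∑ b ∈ T a, ‖u k b‖ :=
      norm_sum_le _ _
    have h2 : ‖w k a‖ ^ 2 ≤ (∑ b ∈ T a, ‖u k b‖) ^ 2 :=
      pow_le_pow_left₀ (norm_nonneg _) h1 2
    exact h2.trans (sq_sum_le_card_mul_sum_sq)
  have hS2 : (∑ k : κ, ∑ a : ι, ‖w k a‖ ^ 2) ≤ (NR : ℝ) * NL := by
    calc (∑ k : κ, ∑ a : ι, ‖w k a‖ ^ 2)
        ≤ ∑ k : κ, ∑ a : ι, ((T a).card : ℝ) * ∑ b ∈ T a, ‖u k b‖ ^ 2 :=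
          Finset.sum_le_sum fun k _ => Finset.sum_le_sum fun a _ => hw2 k a
      _ = ∑ a : ι, ((T a).card : ℝ) * ∑ b ∈ T a, q b := by
          rw [Finset.sum_comm]
          refine Finset.sum_congr rfl fun a _ => ?_
          rw [← Finset.mul_sum, Finset.sum_comm]
      _ ≤ ∑ a : ι, (NR : ℝ) * ∑ b ∈ T a, q b := by
          refine Finset.sum_le_sum fun a _ => ?_
          exact mul_le_mul_of_nonneg_right (Nat.cast_le.2 (hcard1 a))
            (Finset.sum_nonneg fun b _ => hq b)
      _ = (NR : ℝ) * ∑ a : ι, ∑ b ∈ T a, q b := (Finset.mul_sum _ _ _).symm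
      _ = (NR : ℝ) * ∑ b : ι, ((Finset.univ.filter fun a => C a b).card : ℝ) * q b := by
          congr 1
          calc ∑ a : ι, ∑ b ∈ T a, q b
              = ∑ a : ι, ∑ b : ι, (if C a b then q b else 0) :=
                Finset.sum_congr rfl fun a _ => Finset.sum_filter _ _
            _ = ∑ b : ι, ∑ a : ι, (if C a b then q b else 0) := Finset.sum_comm
            _ = ∑ b : ι, ((Finset.univ.filter fun a => C a b).card : ℝ) * q b := by
                refine Finset.sum_congr rfl fun b _ => ?_
                rw [← Finset.sum_filter, Finset.sum_const, nsmul_eq_mul]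
      _ ≤ (NR : ℝ) * ∑ b : ι, (NL : ℝ) * q b := by
          refine mul_le_mul_of_nonneg_left (Finset.sum_le_sum fun b _ => ?_)
            (Nat.cast_nonneg _)
          exact mul_le_mul_of_nonneg_right (Nat.cast_le.2 (hcard2 b)) (hq b)
      _ = (NR : ℝ) * NL := by rw [← Finset.mul_sum, hq1, mul_one]
  rw [f_eq]
  calc ‖∑ k : κ, ∑ a : ι, (starRingEnd ℂ) (u k a) * w k a‖ ^ 2
      ≤ (∑ k : κ, ∑ a : ι, ‖u k a‖ * ‖w k a‖) ^ 2 :=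
        pow_le_pow_left₀ (norm_nonneg _) habs 2
    _ ≤ (∑ k : κ, ∑ a : ι, ‖u k a‖ ^ 2)
        * (∑ k : κ, ∑ a : ι, ‖w k a‖ ^ 2) := hCS
    _ = ∑ k : κ, ∑ a : ι, ‖w k a‖ ^ 2 := by rw [hS1, one_mul]
    _ ≤ (NR : ℝ) * NL := hS2

end Stmt18


namespace Stmt18

open Finset Matrix

lemma trace_decomp {n : Type*} [Fintype n] [DecidableEq n]
    (ρ : Matrix n n ℂ) (A : Matrix n n ℂ) (hA : ρ = Aᴴ * A) (hρt : ρ.trace = 1) :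
    ∑ v : n, ∑ x : n, ‖A v x‖ ^ 2 = 1 := by
  have h : ((∑ v : n, ∑ x : n, ‖A v x‖ ^ 2 : ℝ) : ℂ) = 1 := by
    rw [← hρt]
    rw [Matrix.trace, hA]
    push_cast
    rw [Finset.sum_comm]
    refine Finset.sum_congr rfl fun x _ => ?_
    rw [Matrix.diag_apply, Matrix.mul_apply]
    refine Finset.sum_congr rfl fun v _ => ?_
    rw [Matrix.conjTranspose_apply, ← Complex.ofReal_pow, Complex.sq_norm,
      Complex.normSq_eq_conj_mul_self]
    rfl
  exact_mod_cast h

lemma entry_decomp {p r d : ℕ} (ρ : Matrix (Fin r → Fin d) (Fin r → Fin d) ℂ)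
    (A : Matrix (Fin r → Fin d) (Fin r → Fin d) ℂ) (hA : ρ = Aᴴ * A)
    (a b : Fin p → Fin r → Fin d) :
    (∏ i : Fin p, ρ (a i) (b i)) = ∑ k : Fin p → Fin r → Fin d,
      (starRingEnd ℂ) (∏ i : Fin p, A (k i) (a i)) * (∏ i : Fin p, A (k i) (b i)) := by
  classical
  have hEntry : ∀ x y, ρ x y = ∑ v : Fin r → Fin d, (starRingEnd ℂ) (A v x) * A v y := by
    intro x y
    rw [hA, Matrix.mul_apply]
    refine Finset.sum_congr rfl fun v _ => ?_
    rw [Matrix.conjTranspose_apply]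
    rfl
  calc (∏ i : Fin p, ρ (a i) (b i))
      = ∏ i : Fin p, ∑ v : Fin r → Fin d, (starRingEnd ℂ) (A v (a i)) * A v (b i) :=
        Finset.prod_congr rfl fun i _ => hEntry (a i) (b i)
    _ = ∑ k ∈ Fintype.piFinset (fun _ : Fin p => (Finset.univ : Finset (Fin r → Fin d))),
          ∏ i : Fin p, (starRingEnd ℂ) (A (k i) (a i)) * A (k i) (b i) :=
        Finset.prod_univ_sum _ _
    _ = ∑ k : Fin p → Fin r → Fin d,
          (starRingEnd ℂ) (∏ i : Fin p, A (k i) (a i)) * (∏ i : Fin p, A (k i) (b i)) := by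
        rw [Fintype.piFinset_univ]
        refine Finset.sum_congr rfl fun k _ => ?_
        rw [Finset.prod_mul_distrib, map_prod]

lemma S1_eq {p r d : ℕ} (A : Matrix (Fin r → Fin d) (Fin r → Fin d) ℂ)
    (hA1 : ∑ v : Fin r → Fin d, ∑ x : Fin r → Fin d, ‖A v x‖ ^ 2 = 1) :
    ∑ k : Fin p → Fin r → Fin d, ∑ a : Fin p → Fin r → Fin d,
      ‖∏ i : Fin p, A (k i) (a i)‖ ^ 2 = 1 := by
  classical
  have habs : ∀ (k a : Fin p → Fin r → Fin d),
      ‖∏ i : Fin p, A (k i) (a i)‖ ^ 2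
        = ∏ i : Fin p, ‖A (k i) (a i)‖ ^ 2 := by
    intro k a
    rw [Complex.norm_prod, ← Finset.prod_pow]
  calc ∑ k : Fin p → Fin r → Fin d, ∑ a : Fin p → Fin r → Fin d,
        ‖∏ i : Fin p, A (k i) (a i)‖ ^ 2
      = ∑ k : Fin p → Fin r → Fin d, ∏ i : Fin p,
          ∑ x : Fin r → Fin d, ‖A (k i) x‖ ^ 2 := by
        refine Finset.sum_congr rfl fun k _ => ?_
        rw [show (∏ i : Fin p, ∑ x : Fin r → Fin d, ‖A (k i) x‖ ^ 2)
            = ∑ a ∈ Fintype.piFinset (fun _ : Fin p => (Finset.univ : Finset (Fin r → Fin d))),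
              ∏ i : Fin p, ‖A (k i) (a i)‖ ^ 2 from Finset.prod_univ_sum _ _,
          Fintype.piFinset_univ]
        exact Finset.sum_congr rfl fun a _ => habs k a
    _ = ∏ _i : Fin p, ∑ v : Fin r → Fin d,
          ∑ x : Fin r → Fin d, ‖A v x‖ ^ 2 := by
        rw [show (∏ _i : Fin p, ∑ v : Fin r → Fin d,
            ∑ x : Fin r → Fin d, ‖A v x‖ ^ 2)
            = ∑ k ∈ Fintype.piFinset (fun _ : Fin p => (Finset.univ : Finset (Fin r → Fin d))),
              ∏ i : Fin p, ∑ x : Fin r → Fin d, ‖A (k i) x‖ ^ 2 from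
            Finset.prod_univ_sum _ _, Fintype.piFinset_univ]
    _ = 1 := by rw [hA1]; simp

end Stmt18

open scoped MatrixOrder in
lemma Stmt18.psd_decomp {n : Type*} [Fintype n] [DecidableEq n] {ρ : Matrix n n ℂ}
    (hρ : ρ.PosSemidef) : ∃ A : Matrix n n ℂ, ρ = A.conjTranspose * A := by
  obtain ⟨B, hB⟩ := CStarAlgebra.nonneg_iff_eq_star_mul_self.mp hρ.nonneg
  exact ⟨B, hB⟩

set_option maxHeartbeats 1000000 in
theorem stmt18 (p r d : ℕ) (hp : 1 ≤ p) (hr : 1 ≤ r) (hd : 1 ≤ d)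
    (β : Equiv.Perm (Fin p × Fin r × Bool)) (hβ : IsPairing β)
    (ρ : Matrix (Fin r → Fin d) (Fin r → Fin d) ℂ)
    (hρ : ρ.PosSemidef) (hρt : ρ.trace = 1) :
    ‖fBeta β ρ‖ ^ 2 ≤ (d : ℝ) ^ bigBR β := by
  obtain ⟨A, hA⟩ := Stmt18.psd_decomp hρ
  have hA1 := Stmt18.trace_decomp ρ A hA hρt
  have hrw : fBeta β ρ = ∑ a : Fin p → Fin r → Fin d, ∑ b : Fin p → Fin r → Fin d,
      (∑ k : Fin p → Fin r → Fin d,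
        (starRingEnd ℂ) (∏ i : Fin p, A (k i) (a i)) * (∏ i : Fin p, A (k i) (b i))) *
      (if ∀ z : Fin p × Fin r × Bool, legVal a b z = legVal a b (β z) then 1 else 0) := by
    unfold fBeta
    exact Finset.sum_congr rfl fun a _ => Finset.sum_congr rfl fun b _ => by
      rw [Stmt18.entry_decomp ρ A hA a b]
  rw [hrw]
  have hbound := Stmt18.main_bound (ι := Fin p → Fin r → Fin d) (κ := Fin p → Fin r → Fin d)
    (fun k a => ∏ i : Fin p, A (k i) (a i))
    (fun a b => ∀ z : Fin p × Fin r × Bool, legVal a b z = legVal a b (β z))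
    (d ^ (Stmt18.sideS β true).card) (d ^ (Stmt18.sideS β false).card)
    (Stmt18.S1_eq A hA1)
    (fun a => Stmt18.card_compat_right β hβ a)
    (fun b => Stmt18.card_compat_left β hβ b)
  refine le_trans hbound (le_of_eq ?_)
  have h1 := Stmt18.two_mul_sideS β hβ true
  have h2 := Stmt18.two_mul_sideS β hβ false
  have h3 := Stmt18.BL_eq_BR β hβ
  have hsum : (Stmt18.sideS β true).card + (Stmt18.sideS β false).card = bigBR β := by
    unfold bigBR at *
    omega
  rw [← hsum, pow_add]
  push_cast
  ring
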